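/- Let F be a field and let A ∈ Mat_n(F) be a square matrix whose minimal polynomial g is irreducible of degree d. Then K = F[A] is a field extension of F of degree d, and for every A' ∈ K, det(A') = N^K_F(A')^(n/d), where N^K_F denotes the field norm from K to F. -/

import Mathlib

open Polynomial Matrix

set_option maxHeartbeats 2000000 in
theorem stmt8 {F : Type*} [Field F] {n d : ℕ}
    (A : Matrix (Fin n) (Fin n) F)
    (hirr : Irreducible (minpoly F A)) (hd : (minpoly F A).natDegree = d) :
    IsField (AdjoinRoot (minpoly F A)) ∧
    Module.finrank F (AdjoinRoot (minpoly F A)) = d ∧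
    ∀ q : Polynomial F,
      (Polynomial.aeval A q).det
        = (Algebra.norm F (AdjoinRoot.mk (minpoly F A) q)) ^ (n / d) := by
  classical
  set g := minpoly F A with hg
  haveI : Fact (Irreducible g) := ⟨hirr⟩
  have hg0 : g ≠ 0 := hirr.ne_zero
  have hd0 : 0 < d := hd ▸ hirr.natDegree_pos
  set K := AdjoinRoot g
  set V := Fin n → F
  -- power basis of K over F
  let pb := AdjoinRoot.powerBasis hg0
  have hfinrank : Module.finrank F K = d := by
    rw [pb.finrank, AdjoinRoot.powerBasis_dim, hd]
  refine ⟨Field.toIsField K, hfinrank, fun q => ?_⟩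
  -- the algebra map from K to matrices
  have hann : ∀ a : Polynomial F, a ∈ Ideal.span {g} → Polynomial.aeval A a = 0 := by
    intro a ha
    rw [Ideal.mem_span_singleton] at ha
    obtain ⟨b, rfl⟩ := ha
    rw [_root_.map_mul, minpoly.aeval, zero_mul]
  let ψ : K →ₐ[F] Matrix (Fin n) (Fin n) F :=
    Ideal.Quotient.liftₐ (Ideal.span {g}) (Polynomial.aeval A) hann
  let ρ : K →ₐ[F] Module.End F V :=
    (Matrix.toLinAlgEquiv' : Matrix (Fin n) (Fin n) F ≃ₐ[F] Module.End F V).toAlgHom.comp ψ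
  letI : Module K V := Module.compHom V ρ.toRingHom
  have hsmul : ∀ (k : K) (v : V), k • v = ρ k v := fun _ _ => rfl
  haveI : IsScalarTower F K V := by
    refine ⟨fun a k v => ?_⟩
    rw [hsmul, hsmul, _root_.map_smul]
    rfl
  haveI : FiniteDimensional K V := FiniteDimensional.right F K V
  set m := Module.finrank K V with hm
  have hv : Module.finrank F V = n := by
    simp [V]
  have hn : n = d * m := by
    have h2 := Module.finrank_mul_finrank F K V
    rw [hfinrank, hv] at h2
    rw [← h2, hm]
  have hnd : n / d = m := by rw [hn, Nat.mul_div_cancel_left _ hd0]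
  set x : K := AdjoinRoot.mk g q with hx
  let b : Module.Basis (Fin pb.dim) F K := pb.basis
  let c : Module.Basis (Fin m) K V := Module.finBasis K V
  let bb : Module.Basis (Fin pb.dim × Fin m) F V := b.smulTower c
  -- the F-linear map given by q(A)
  set T : V →ₗ[F] V := Matrix.toLin' (Polynomial.aeval A q) with hT
  have hTx : ∀ v : V, T v = x • v := by
    intro v
    rw [hsmul]
    show Matrix.toLin' (Polynomial.aeval A q) v = Matrix.toLinAlgEquiv' (ψ x) v
    rw [hx, show ψ (AdjoinRoot.mk g q) = Polynomial.aeval A q from Ideal.Quotient.lift_mk _ _ _]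
    rfl
  have hmat : LinearMap.toMatrix bb bb T
      = Matrix.blockDiagonal (fun _ : Fin m => Algebra.leftMulMatrix b x) := by
    ext ⟨i, j⟩ ⟨i', j'⟩
    rw [LinearMap.toMatrix_apply, Matrix.blockDiagonal_apply, hTx,
      Module.Basis.smulTower_apply, smul_smul, Module.Basis.smulTower_repr]
    rw [_root_.map_smul, Module.Basis.repr_self, Finsupp.smul_apply, Finsupp.single_apply]
    by_cases hj : j = j'
    · subst hj
      rw [Algebra.leftMulMatrix_eq_repr_mul]
      simp
    · simp [hj, Ne.symm hj]
  have hdet : (Polynomial.aeval A q).det = LinearMap.det T := by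
    rw [hT, LinearMap.det_toLin']
  rw [hdet, ← LinearMap.det_toMatrix bb, hmat, Matrix.det_blockDiagonal, hnd]
  rw [Algebra.norm_eq_matrix_det b x]
  simp
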